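/- With α = 2/3, ψ₀(x) = sin(2x/3) + (1/√3) cos(2x/3) and ψ₁(x) = −(1/(4√3)) cos(5x/3) − (1/4) sin(5x/3) − (5/4) sin(x/3) + (5/(4√3)) cos(x/3), the identity (−α+1)² ψ₁(x) + ψ₁''(x) = −(−α cos(x) ψ₀(x) − sin(x) ψ₀'(x)) holds for all real x, and ψ₁'(−π) = ψ₁'(π/2) = 0. -/

import Mathlib

open Real

noncomputable def vpsi010 : ℝ → ℝ := fun x => Real.sin (2*x/3) + (1/Real.sqrt 3) * Real.cos (2*x/3)
noncomputable def vpsi011 : ℝ → ℝ := fun x =>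
  -(1/(4*Real.sqrt 3)) * Real.cos (5*x/3) - (1/4) * Real.sin (5*x/3)
    - (5/4) * Real.sin (x/3) + (5/(4*Real.sqrt 3)) * Real.cos (x/3)

lemma hd53 (x : ℝ) : HasDerivAt (fun x : ℝ => 5*x/3) (5/3) x := by
  simpa using ((hasDerivAt_id x).const_mul (5:ℝ)).div_const 3

lemma hd13 (x : ℝ) : HasDerivAt (fun x : ℝ => x/3) (1/3) x := by
  simpa using (hasDerivAt_id x).div_const 3

lemma hd23 (x : ℝ) : HasDerivAt (fun x : ℝ => 2*x/3) (2/3) x := by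
  simpa using ((hasDerivAt_id x).const_mul (2:ℝ)).div_const 3

lemma vpsi011_deriv1 (x : ℝ) : HasDerivAt vpsi011
    ((5/(12*Real.sqrt 3)) * Real.sin (5*x/3) - (5/12) * Real.cos (5*x/3)
      - (5/12) * Real.cos (x/3) - (5/(12*Real.sqrt 3)) * Real.sin (x/3)) x := by
  have h1 : HasDerivAt (fun x : ℝ => Real.cos (5*x/3)) (-Real.sin (5*x/3) * (5/3)) x :=
    (Real.hasDerivAt_cos _).comp x (hd53 x)
  have h2 : HasDerivAt (fun x : ℝ => Real.sin (5*x/3)) (Real.cos (5*x/3) * (5/3)) x :=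
    (Real.hasDerivAt_sin _).comp x (hd53 x)
  have h3 : HasDerivAt (fun x : ℝ => Real.sin (x/3)) (Real.cos (x/3) * (1/3)) x :=
    (Real.hasDerivAt_sin _).comp x (hd13 x)
  have h4 : HasDerivAt (fun x : ℝ => Real.cos (x/3)) (-Real.sin (x/3) * (1/3)) x :=
    (Real.hasDerivAt_cos _).comp x (hd13 x)
  have := (((h1.const_mul (-(1/(4*Real.sqrt 3)))).sub (h2.const_mul (1/4))).sub
    (h3.const_mul (5/4))).add (h4.const_mul (5/(4*Real.sqrt 3)))
  exact this.congr_deriv (by ring)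

lemma vpsi011_deriv_eq : deriv vpsi011 = fun x =>
    (5/(12*Real.sqrt 3)) * Real.sin (5*x/3) - (5/12) * Real.cos (5*x/3)
      - (5/12) * Real.cos (x/3) - (5/(12*Real.sqrt 3)) * Real.sin (x/3) := by
  funext x; exact (vpsi011_deriv1 x).deriv

lemma vpsi011_deriv2 (x : ℝ) : deriv (deriv vpsi011) x =
    (25/(36*Real.sqrt 3)) * Real.cos (5*x/3) + (25/36) * Real.sin (5*x/3)
      + (5/36) * Real.sin (x/3) - (5/(36*Real.sqrt 3)) * Real.cos (x/3) := by
  rw [vpsi011_deriv_eq]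
  have h1 : HasDerivAt (fun x : ℝ => Real.cos (5*x/3)) (-Real.sin (5*x/3) * (5/3)) x :=
    (Real.hasDerivAt_cos _).comp x (hd53 x)
  have h2 : HasDerivAt (fun x : ℝ => Real.sin (5*x/3)) (Real.cos (5*x/3) * (5/3)) x :=
    (Real.hasDerivAt_sin _).comp x (hd53 x)
  have h3 : HasDerivAt (fun x : ℝ => Real.sin (x/3)) (Real.cos (x/3) * (1/3)) x :=
    (Real.hasDerivAt_sin _).comp x (hd13 x)
  have h4 : HasDerivAt (fun x : ℝ => Real.cos (x/3)) (-Real.sin (x/3) * (1/3)) x :=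
    (Real.hasDerivAt_cos _).comp x (hd13 x)
  have H := (((h2.const_mul (5/(12*Real.sqrt 3))).sub (h1.const_mul (5/12))).sub
    (h4.const_mul (5/12))).sub (h3.const_mul (5/(12*Real.sqrt 3)))
  exact H.deriv.trans (by ring)

lemma vpsi010_deriv (x : ℝ) : deriv vpsi010 x =
    (2/3) * Real.cos (2*x/3) - (2/(3*Real.sqrt 3)) * Real.sin (2*x/3) := by
  have h1 : HasDerivAt (fun x : ℝ => Real.sin (2*x/3)) (Real.cos (2*x/3) * (2/3)) x :=
    (Real.hasDerivAt_sin _).comp x (hd23 x)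
  have h2 : HasDerivAt (fun x : ℝ => Real.cos (2*x/3)) (-Real.sin (2*x/3) * (2/3)) x :=
    (Real.hasDerivAt_cos _).comp x (hd23 x)
  have H := h1.add (h2.const_mul (1/Real.sqrt 3))
  rw [show vpsi010 = ((fun x => Real.sin (2*x/3)) + fun y => (1/Real.sqrt 3) * Real.cos (2*y/3)) from rfl,
    H.deriv]
  have h3 : Real.sqrt 3 ≠ 0 := by positivity
  field_simp
  ring

theorem vnotch_first_dual_shadow_j1 :
    (∀ x : ℝ, (-(2/3 : ℝ) + 1)^2 * vpsi011 x + deriv (deriv vpsi011) x =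
      -(-(2/3 : ℝ) * Real.cos x * vpsi010 x - Real.sin x * deriv vpsi010 x)) ∧
    deriv vpsi011 (-π) = 0 ∧ deriv vpsi011 (π/2) = 0 := by
  have s3 : Real.sqrt 3 * Real.sqrt 3 = 3 := Real.mul_self_sqrt (by norm_num)
  have s3ne : Real.sqrt 3 ≠ 0 := by positivity
  refine ⟨fun x => ?_, ?_, ?_⟩
  · rw [vpsi011_deriv2, vpsi010_deriv]
    show (-(2/3 : ℝ) + 1)^2 * (-(1/(4*Real.sqrt 3)) * Real.cos (5*x/3) - (1/4) * Real.sin (5*x/3)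
      - (5/4) * Real.sin (x/3) + (5/(4*Real.sqrt 3)) * Real.cos (x/3)) + _ =
      -(-(2/3 : ℝ) * Real.cos x * (Real.sin (2*x/3) + (1/Real.sqrt 3) * Real.cos (2*x/3)) - _)
    have e1 : 5*x/3 = x + 2*x/3 := by ring
    rw [e1, Real.sin_add, Real.cos_add]
    field_simp
    nlinarith [s3, Real.sin_sq_add_cos_sq (x/3), Real.sin_sq_add_cos_sq x,
      Real.sin_sq_add_cos_sq (2*x/3)]
  · rw [vpsi011_deriv_eq]
    beta_reduce
    have e1 : 5*(-π)/3 = -(2*π) + π/3 := by ring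
    have e2 : (-π)/3 = -(π/3) := by ring
    rw [e1, e2, Real.sin_add, Real.cos_add, Real.sin_neg, Real.cos_neg, Real.sin_neg,
      Real.cos_neg, Real.sin_two_pi, Real.cos_two_pi, Real.sin_pi_div_three,
      Real.cos_pi_div_three]
    field_simp
    nlinarith [s3]
  · rw [vpsi011_deriv_eq]
    beta_reduce
    have e1 : 5*(π/2)/3 = π - π/6 := by ring
    have e2 : (π/2)/3 = π/6 := by ring
    rw [e1, e2, Real.sin_pi_sub, Real.cos_pi_sub, Real.sin_pi_div_six, Real.cos_pi_div_six]
    ring
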